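/- Suppose f, g : (a,b) → (0,∞) with f nondecreasing and for all x: ∫_{a}^{x} f(s) ds = ∫_{ã}^{η(x)} g(s) ds where f, g are locally integrable, g > 0 a.e., and η : (a,b) → (ã,b̃) is a continuous strictly increasing bijection. Then η is locally absolutely continuous and f(x) = η'(x) g(η(x)) for almost all x ∈ (a,b). -/

import Mathlib

open MeasureTheory Set

noncomputable section

open Filter Metric Topology


/-- Lebesgue differentiation: a.e. derivative of the primitive of an integrable function. -/
theorem ae_hasDerivAt_primitive (h : ℝ → ℝ) (hint : Integrable h) (c : ℝ) :
    ∀ᵐ x, HasDerivAt (fun t => ∫ s in c..t, h s) (h x) x := by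
  filter_upwards [IsUnifLocDoublingMeasure.ae_tendsto_average_norm_sub (μ := volume)
    hint.locallyIntegrable 1] with x hx
  rw [hasDerivAt_iff_tendsto]
  rw [← nhdsNE_sup_pure x, tendsto_sup]
  constructor
  · -- along 𝓝[≠] x
    have key : Tendsto (fun x' : ℝ =>
        ⨍ y in closedBall ((x + x') / 2) (|x' - x| / 2), ‖h y - h x‖) (𝓝[≠] x) (𝓝 0) := by
      apply hx (fun x' => (x + x') / 2) (fun x' => |x' - x| / 2)
      · rw [tendsto_nhdsWithin_iff]
        constructor
        · have : Tendsto (fun x' : ℝ => |x' - x| / 2) (𝓝 x) (𝓝 (|x - x|/2)) := by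
            exact (((continuous_id.sub continuous_const).abs).div_const 2).tendsto x
          simpa using this.mono_left nhdsWithin_le_nhds
        · filter_upwards [self_mem_nhdsWithin] with x' (hx' : x' ≠ x)
          have : (0:ℝ) < |x' - x| := abs_pos.2 (sub_ne_zero.2 hx')
          exact mem_Ioi.2 (by linarith)
      · filter_upwards with x'
        simp only [mem_closedBall, Real.dist_eq, one_mul]
        rw [show x - (x + x') / 2 = (x - x') / 2 by ring, abs_div, abs_sub_comm x' x]
        simp [abs_of_nonneg]
    refine squeeze_zero_norm' ?_ key
    filter_upwards [self_mem_nhdsWithin] with x' (hx' : x' ≠ x)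
    have hd : (0:ℝ) < |x' - x| := abs_pos.2 (sub_ne_zero.2 hx')
    have hI : uIoc x x' ⊆ closedBall ((x + x') / 2) (|x' - x| / 2) := by
      intro y hy
      simp only [mem_closedBall, Real.dist_eq]
      rcases le_total x x' with hle | hle
      · rw [uIoc_of_le hle] at hy
        rw [abs_of_nonneg (by linarith [hy.1.le, hy.2] : (0:ℝ) ≤ x' - x)]
        rw [abs_le]; constructor <;> [linarith [hy.1.le, hy.2]; linarith [hy.1.le, hy.2]]
      · rw [uIoc_of_ge hle] at hy
        rw [abs_of_nonpos (by linarith : x' - x ≤ 0)]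
        rw [abs_le]; constructor <;> [linarith [hy.1.le, hy.2]; linarith [hy.1.le, hy.2]]
    have hvol : (volume (closedBall ((x + x') / 2) (|x' - x| / 2))).toReal = |x' - x| := by
      rw [Real.volume_closedBall, ENNReal.toReal_ofReal (by positivity)]
      ring
    have hintcb : IntegrableOn (fun y => ‖h y - h x‖) (closedBall ((x + x') / 2) (|x' - x| / 2)) := by
      apply (hint.integrableOn.sub ?_).norm
      exact integrableOn_const (by rw [Real.volume_closedBall]; exact ENNReal.ofReal_ne_top)
    have step1 : ‖(∫ s in x..x', h s) - (x' - x) • h x‖ ≤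
        ∫ y in closedBall ((x + x') / 2) (|x' - x| / 2), ‖h y - h x‖ := by
      have : (∫ s in x..x', h s) - (x' - x) • h x = ∫ s in x..x', (h s - h x) := by
        rw [intervalIntegral.integral_sub hint.intervalIntegrable
          (intervalIntegrable_const), intervalIntegral.integral_const]
      rw [this]
      calc ‖∫ s in x..x', (h s - h x)‖ ≤ ∫ s in uIoc x x', ‖h s - h x‖ :=
            intervalIntegral.norm_integral_le_integral_norm_uIoc
        _ ≤ _ := setIntegral_mono_set hintcb
            (Eventually.of_forall fun y => norm_nonneg _) (HasSubset.Subset.eventuallyLE hI)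
    have : ‖x' - x‖⁻¹ * ‖(∫ s in c..x', h s) - (∫ s in c..x, h s) - (x' - x) • h x‖ =
        ‖x' - x‖⁻¹ * ‖(∫ s in x..x', h s) - (x' - x) • h x‖ := by
      congr 2
      rw [← intervalIntegral.integral_add_adjacent_intervals
        (hint.intervalIntegrable) (hint.intervalIntegrable) (a := c) (b := x) (c := x')]
      ring
    rw [Real.norm_eq_abs, this]
    rw [setAverage_eq, measureReal_def, hvol, smul_eq_mul, abs_of_nonneg (by positivity)]
    calc ‖x' - x‖⁻¹ * ‖(∫ s in x..x', h s) - (x' - x) • h x‖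
        ≤ ‖x' - x‖⁻¹ * ∫ y in closedBall ((x + x') / 2) (|x' - x| / 2), ‖h y - h x‖ := by
          apply mul_le_mul_of_nonneg_left step1 (by positivity)
      _ = |x' - x|⁻¹ * ∫ y in closedBall ((x + x') / 2) (|x' - x| / 2), ‖h y - h x‖ := by
          rw [Real.norm_eq_abs]
      _ ≤ |x' - x|⁻¹ * ∫ y in closedBall ((x + x') / 2) (|x' - x| / 2), ‖h y - h x‖ := le_rfl
  · -- along pure x
    rw [tendsto_pure_left]
    intro s hs
    simpa using mem_of_mem_nhds hs

theorem aux_inv_hasDerivAt {h : ℝ → ℝ} {c d x m : ℝ}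
    (hm : StrictMonoOn h (Ioo c d)) (hx : x ∈ Ioo c d)
    (himg : h '' (Ioo c d) ∈ 𝓝 (h x))
    (hd : HasDerivAt h m x) (hm0 : m ≠ 0) :
    HasDerivAt (Function.invFunOn h (Ioo c d)) m⁻¹ (h x) := by
  set φ := Function.invFunOn h (Ioo c d) with hφ
  have inj : InjOn h (Ioo c d) := hm.injOn
  have hφh : ∀ w ∈ Ioo c d, φ (h w) = w := fun w hw => inj.leftInvOn_invFunOn hw
  have hleft : ∀ z ∈ h '' (Ioo c d), h (φ z) = z := by
    rintro z ⟨w, hw, rfl⟩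
    rw [hφh w hw]
  have hmem : ∀ z ∈ h '' (Ioo c d), φ z ∈ Ioo c d := by
    rintro z ⟨w, hw, rfl⟩
    rw [hφh w hw]; exact hw
  have φmono : StrictMonoOn φ (h '' (Ioo c d)) := by
    intro z1 hz1 z2 hz2 hlt
    by_contra hle
    push_neg at hle
    have : z2 ≤ z1 := by
      rcases eq_or_lt_of_le hle with heq | hlt2
      · rw [← hleft z1 hz1, ← hleft z2 hz2, heq]
      · refine le_of_lt ?_
        rw [← hleft z1 hz1, ← hleft z2 hz2]
        exact hm (hmem z2 hz2) (hmem z1 hz1) hlt2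
    exact absurd hlt (not_lt.2 this)
  have himg2 : φ '' (h '' (Ioo c d)) ∈ 𝓝 (φ (h x)) := by
    rw [hφh x hx]
    refine Filter.mem_of_superset (isOpen_Ioo.mem_nhds hx) ?_
    intro w hw
    exact ⟨h w, mem_image_of_mem h hw, hφh w hw⟩
  have hcont : ContinuousAt φ (h x) := φmono.continuousAt_of_image_mem_nhds himg himg2
  exact HasDerivAt.of_local_left_inverse hcont (by rw [hφh x hx]; exact hd) hm0
    (Filter.eventually_of_mem himg hleft)

lemma integral_Ioo_split {f : ℝ → ℝ} {a u v : ℝ} (hau : a < u) (huv : u ≤ v)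
    (hint : IntegrableOn f (Ioo a v)) :
    ∫ x in Ioo u v, f x = (∫ x in Ioo a v, f x) - ∫ x in Ioo a u, f x := by
  have hsplit : Ioo a u ∪ Ico u v = Ioo a v := Ioo_union_Ico_eq_Ioo hau huv
  have h1 : IntegrableOn f (Ioo a u) := hint.mono_set (by rw [← hsplit]; exact subset_union_left)
  have h2 : IntegrableOn f (Ico u v) := hint.mono_set (by rw [← hsplit]; exact subset_union_right)
  have hdisj : Disjoint (Ioo a u) (Ico u v) := by
    apply Set.disjoint_left.2
    rintro x ⟨_, hxu⟩ ⟨hux, _⟩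
    exact absurd hux (not_le.2 hxu)
  have := setIntegral_union hdisj measurableSet_Ico h1 h2 (f := f) (μ := volume)
  rw [hsplit] at this
  rw [this, integral_Ico_eq_integral_Ioo]
  ring

theorem aux_map (a b ta tb : ℝ)
    (f g η : ℝ → ℝ)
    (hfpos : ∀ x ∈ Ioo a b, 0 < f x)
    (hgpos : ∀ᵐ y ∂(volume.restrict (Ioo ta tb)), 0 < g y)
    (hfint : ∀ x ∈ Ioo a b, IntegrableOn f (Ioo a x))
    (hgint : ∀ y ∈ Ioo ta tb, IntegrableOn g (Ioo ta y))
    (hηcont : ContinuousOn η (Ioo a b))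
    (hηmono : StrictMonoOn η (Ioo a b))
    (hηbij : BijOn η (Ioo a b) (Ioo ta tb))
    (heq : ∀ x ∈ Ioo a b, ∫ s in Ioo a x, f s = ∫ s in Ioo ta (η x), g s)
    {α β : ℝ} (hα : α ∈ Ioo a b) (hβ : β ∈ Ioo a b) (hαβ : α ≤ β) :
    Measure.map η ((volume.restrict (Ioo α β)).withDensity fun x => ENNReal.ofReal (f x)) =
      (volume.restrict (Ioo (η α) (η β))).withDensity fun y => ENNReal.ofReal (g y) := by
  set μ1 := (volume.restrict (Ioo α β)).withDensity fun x => ENNReal.ofReal (f x) with hμ1def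
  set μ2 := (volume.restrict (Ioo (η α) (η β))).withDensity fun y => ENNReal.ofReal (g y) with hμ2def
  have hηα : η α ∈ Ioo ta tb := hηbij.mapsTo hα
  have hηβ : η β ∈ Ioo ta tb := hηbij.mapsTo hβ
  have hsub : Ioo α β ⊆ Ioo a b := Ioo_subset_Ioo hα.1.le hβ.2.le
  have hηae : AEMeasurable η μ1 :=
    ((hηcont.mono hsub).aemeasurable measurableSet_Ioo).mono_ac
      (withDensity_absolutelyContinuous _ _)
  -- integrability facts
  have hfαβ : IntegrableOn f (Ioo α β) :=
    (hfint β hβ).mono_set (Ioo_subset_Ioo hα.1.le le_rfl)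
  -- value of μ1 on measurable sets
  have hμ1val : ∀ {s : Set ℝ}, MeasurableSet s →
      μ1 s = ∫⁻ x in s ∩ Ioo α β, ENNReal.ofReal (f x) := by
    intro s hs
    rw [hμ1def, withDensity_apply _ hs, Measure.restrict_restrict hs]
  have hμ2val : ∀ {s : Set ℝ}, MeasurableSet s →
      μ2 s = ∫⁻ y in s ∩ Ioo (η α) (η β), ENNReal.ofReal (g y) := by
    intro s hs
    rw [hμ2def, withDensity_apply _ hs, Measure.restrict_restrict hs]
  -- lintegral to integral conversions
  have hfnn : ∀ {u v : ℝ}, u ∈ Ioo a b → v ∈ Ioo a b → u ≤ v →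
      ∫⁻ x in Ioo u v, ENNReal.ofReal (f x) = ENNReal.ofReal (∫ x in Ioo u v, f x) := by
    intro u v hu hv huv
    refine (ofReal_integral_eq_lintegral_ofReal
      ((hfint v hv).mono_set (Ioo_subset_Ioo hu.1.le le_rfl)) ?_).symm
    refine (ae_restrict_iff' measurableSet_Ioo).2 (Eventually.of_forall fun x hx => ?_)
    exact (hfpos x ⟨hu.1.trans hx.1, hx.2.trans hv.2⟩).le
  have hgnn : ∀ {u v : ℝ}, u ∈ Ioo ta tb → v ∈ Ioo ta tb → u ≤ v →
      ∫⁻ y in Ioo u v, ENNReal.ofReal (g y) = ENNReal.ofReal (∫ y in Ioo u v, g y) := by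
    intro u v hu hv huv
    refine (ofReal_integral_eq_lintegral_ofReal
      ((hgint v hv).mono_set (Ioo_subset_Ioo hu.1.le le_rfl)) ?_).symm
    have := ae_restrict_of_ae_restrict_of_subset
      (Ioo_subset_Ioo hu.1.le hv.2.le) hgpos
    filter_upwards [this] with y hy using hy.le
  -- the fundamental identity on subintervals
  have eq3 : ∀ u v, u ∈ Ioo a b → v ∈ Ioo a b → u ≤ v →
      ∫ x in Ioo u v, f x = ∫ y in Ioo (η u) (η v), g y := by
    intro u v hu hv huv
    have h1 : ∫ x in Ioo u v, f x = (∫ x in Ioo a v, f x) - ∫ x in Ioo a u, f x :=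
      integral_Ioo_split hu.1 huv (hfint v hv)
    have h2 : ∫ y in Ioo (η u) (η v), g y =
        (∫ y in Ioo ta (η v), g y) - ∫ y in Ioo ta (η u), g y := by
      refine integral_Ioo_split (hηbij.mapsTo hu).1 ?_ (hgint _ (hηbij.mapsTo hv))
      rcases eq_or_lt_of_le huv with rfl | h
      · exact le_rfl
      · exact (hηmono hu hv h).le
    rw [h1, h2, heq u hu, heq v hv]
  -- finiteness
  have hμ1fin : μ1 univ ≠ ⊤ := by
    rw [hμ1val MeasurableSet.univ, univ_inter]
    exact hfαβ.setLIntegral_lt_top.ne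
  haveI : IsFiniteMeasure (Measure.map η μ1) := by
    constructor
    rw [Measure.map_apply_of_aemeasurable hηae MeasurableSet.univ, preimage_univ]
    exact hμ1fin.lt_top
  -- null outside Ioo α β
  have hcompl : μ1 (Ioo α β)ᶜ = 0 := by
    rw [hμ1val measurableSet_Ioo.compl, compl_inter_self, Measure.restrict_empty,
      lintegral_zero_measure]
  refine Measure.ext_of_Iic _ _ ?_
  intro y
  rw [Measure.map_apply_of_aemeasurable hηae measurableSet_Iic]
  have key : μ1 (η ⁻¹' Iic y) = μ1 (η ⁻¹' Iic y ∩ Ioo α β) := (measure_inter_conull hcompl).symm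
  rw [key, hμ2val measurableSet_Iic]
  rcases lt_or_ge y (η α) with hy | hy
  · -- both zero
    have h1 : η ⁻¹' Iic y ∩ Ioo α β = ∅ := by
      ext x
      simp only [mem_inter_iff, mem_preimage, mem_Iic, mem_Ioo, mem_empty_iff_false, iff_false]
      rintro ⟨hxy, hx1, hx2⟩
      have : η α < η x := hηmono hα ⟨hα.1.trans hx1, hx2.trans hβ.2⟩ hx1
      linarith
    have h2 : Iic y ∩ Ioo (η α) (η β) = ∅ := by
      ext z
      simp only [mem_inter_iff, mem_Iic, mem_Ioo, mem_empty_iff_false, iff_false]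
      rintro ⟨hzy, hz1, hz2⟩
      linarith
    rw [h1, h2]
    simp
  · rcases le_or_gt (η β) y with hy2 | hy2
    · -- full
      have h1 : η ⁻¹' Iic y ∩ Ioo α β = Ioo α β := by
        apply inter_eq_right.2
        intro x hx
        have hx' : x ∈ Ioo a b := hsub hx
        have : η x < η β := hηmono hx' hβ hx.2
        exact le_trans this.le hy2
      have h2 : Iic y ∩ Ioo (η α) (η β) = Ioo (η α) (η β) := by
        apply inter_eq_right.2
        intro z hz
        exact le_trans hz.2.le hy2
      rw [h1, h2, hμ1val measurableSet_Ioo, inter_self, hfnn hα hβ hαβ, hgnn hηα hηβ ?hle, eq3 α β hα hβ hαβ]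
      case hle =>
        rcases eq_or_lt_of_le hαβ with rfl | h
        · exact le_rfl
        · exact (hηmono hα hβ h).le
    · -- middle: find c with η c = y
      have hymem : y ∈ Ioo ta tb := ⟨hηα.1.trans_le hy, hy2.trans hηβ.2⟩
      obtain ⟨c, hc, hcy⟩ := hηbij.surjOn hymem
      have hαc : α ≤ c := by
        by_contra hlt
        push_neg at hlt
        have : η c < η α := hηmono hc hα hlt
        rw [hcy] at this
        linarith
      have hcβ : c < β := by
        by_contra hge
        push_neg at hge
        have : η β ≤ η c := by
          rcases eq_or_lt_of_le hge with rfl | h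
          · exact le_rfl
          · exact (hηmono hβ hc h).le
        rw [hcy] at this
        linarith
      have h1 : η ⁻¹' Iic y ∩ Ioo α β = Ioc α c := by
        ext x
        simp only [mem_inter_iff, mem_preimage, mem_Iic, mem_Ioo, mem_Ioc]
        constructor
        · rintro ⟨hxy, hx1, hx2⟩
          refine ⟨hx1, ?_⟩
          by_contra hgt
          push_neg at hgt
          have : η c < η x := hηmono hc ⟨hα.1.trans hx1, hx2.trans hβ.2⟩ hgt
          rw [hcy] at this
          linarith
        · rintro ⟨hx1, hx2⟩
          have hx' : x ∈ Ioo a b := ⟨hα.1.trans hx1, (hx2.trans_lt hcβ).trans hβ.2⟩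
          refine ⟨?_, hx1, hx2.trans_lt hcβ⟩
          rcases eq_or_lt_of_le hx2 with rfl | h
          · exact hcy.le
          · rw [← hcy]
            exact (hηmono hx' hc h).le
      have h2 : Iic y ∩ Ioo (η α) (η β) = Ioc (η α) (η c) := by
        ext z
        simp only [mem_inter_iff, mem_Iic, mem_Ioo, mem_Ioc, hcy]
        constructor
        · rintro ⟨hzy, hz1, hz2⟩
          exact ⟨hz1, hzy⟩
        · rintro ⟨hz1, hz2⟩
          exact ⟨hz2, hz1, hz2.trans_lt (by rw [hcy] at *; exact hy2)⟩
      rw [h1, h2, hμ1val measurableSet_Ioc]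
      have h3 : Ioc α c ∩ Ioo α β = Ioc α c :=
        inter_eq_left.2 fun x hx => ⟨hx.1, hx.2.trans_lt hcβ⟩
      have h4 : Ioc (η α) (η c) ∩ Ioo (η α) (η β) = Ioc (η α) (η c) := by
        apply inter_eq_left.2
        intro z hz
        refine ⟨hz.1, hz.2.trans_lt ?_⟩
        rw [hcy]; exact hy2
      rw [h3,
        setLIntegral_congr (μ := volume) (Ioo_ae_eq_Ioc (a := α) (b := c)).symm,
        setLIntegral_congr (μ := volume) (Ioo_ae_eq_Ioc (a := η α) (b := η c)).symm,
        hfnn hα hc hαc, hgnn hηα (hηbij.mapsTo hc) ?hle2, eq3 α c hα hc hαc]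
      case hle2 =>
        rcases eq_or_lt_of_le hαc with rfl | h
        · exact le_rfl
        · exact (hηmono hα hc h).le

/-- if `∫_a^x f = ∫_ã^{η(x)} g` for a nondecreasing positive `f`, a positive
locally integrable `g` and a continuous strictly increasing bijection
`η : (a,b) → (ã,b̃)`, then `η` is locally absolutely continuous (expressed by the fundamental
theorem of calculus for its derivative) and `f(x) = η'(x) g(η(x))` almost everywhere. -/
theorem change_of_variable_absolutely_continuous
    (a b ta tb : ℝ) (hab : a < b) (htab : ta < tb)
    (f g η : ℝ → ℝ)
    (hfpos : ∀ x ∈ Ioo a b, 0 < f x)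
    (hfmono : MonotoneOn f (Ioo a b))
    (hgmeas : Measurable g)
    (hgpos : ∀ᵐ y ∂(volume.restrict (Ioo ta tb)), 0 < g y)
    (hfint : ∀ x ∈ Ioo a b, IntegrableOn f (Ioo a x))
    (hgint : ∀ y ∈ Ioo ta tb, IntegrableOn g (Ioo ta y))
    (hηcont : ContinuousOn η (Ioo a b))
    (hηmono : StrictMonoOn η (Ioo a b))
    (hηbij : BijOn η (Ioo a b) (Ioo ta tb))
    (heq : ∀ x ∈ Ioo a b, ∫ s in Ioo a x, f s = ∫ s in Ioo ta (η x), g s) :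
    ∃ η' : ℝ → ℝ,
      (∀ α ∈ Ioo a b, ∀ β ∈ Ioo a b, η β - η α = ∫ t in α..β, η' t) ∧
      (∀ᵐ x ∂(volume.restrict (Ioo a b)), HasDerivAt η (η' x) x ∧ f x = η' x * g (η x)) := by
  have hfae : AEMeasurable f (volume.restrict (Ioo a b)) :=
    aemeasurable_restrict_of_monotoneOn measurableSet_Ioo hfmono
  set F : ℝ → ℝ := fun t => ∫ s in Ioo a t, f s with hFdef
  set G : ℝ → ℝ := fun y => ∫ s in Ioo ta y, g s with hGdef
  have hba : (0:ℝ) < b - a := by linarith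
  have htba : (0:ℝ) < tb - ta := by linarith
  -- covering sequences for (a,b)
  set u : ℕ → ℝ := fun n => a + (b - a) / (n + 3) with hudef
  set v : ℕ → ℝ := fun n => b - (b - a) / (n + 3) with hvdef
  have hn3 : ∀ n : ℕ, (0:ℝ) < (n:ℝ) + 3 := fun n => by positivity
  have hufrac : ∀ n : ℕ, 0 < (b - a) / ((n:ℝ) + 3) := fun n => div_pos hba (hn3 n)
  have huv : ∀ n : ℕ, u n < v n := by
    intro n
    have h1 : (b - a) / ((n:ℝ) + 3) < (b - a) / 2 := by
      apply div_lt_div_of_pos_left hba (by norm_num)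
      have : (2:ℝ) < (n:ℝ) + 3 := by
        have : (0:ℝ) ≤ (n:ℝ) := Nat.cast_nonneg n
        linarith
      exact this
    simp only [hudef, hvdef]
    linarith
  have humem : ∀ n : ℕ, u n ∈ Ioo a b := by
    intro n
    constructor
    · simp only [hudef]; linarith [hufrac n]
    · have := huv n
      have : v n < b := by simp only [hvdef]; linarith [hufrac n]
      linarith [huv n]
  have hvmem : ∀ n : ℕ, v n ∈ Ioo a b := by
    intro n
    constructor
    · linarith [huv n, (humem n).1]
    · simp only [hvdef]; linarith [hufrac n]
  have hcover : ∀ x ∈ Ioo a b, ∃ n : ℕ, x ∈ Ioo (u n) (v n) := by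
    intro x hx
    set ε := min (x - a) (b - x) with hεdef
    have hε : 0 < ε := lt_min (by linarith [hx.1]) (by linarith [hx.2])
    obtain ⟨n, hn⟩ := exists_nat_one_div_lt (div_pos hε hba)
    refine ⟨n, ?_, ?_⟩
    · have h1 : (b - a) / ((n:ℝ) + 3) < ε := by
        have h2 : (b - a) / ((n:ℝ) + 3) ≤ (b - a) / ((n:ℝ) + 1) := by
          apply div_le_div_of_nonneg_left hba.le (by positivity)
          linarith
        have h3 : (b - a) / ((n:ℝ) + 1) = (b - a) * (1 / ((n:ℝ) + 1)) := by ring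
        have h4 : (b - a) * (1 / ((n:ℝ) + 1)) < (b - a) * (ε / (b - a)) :=
          mul_lt_mul_of_pos_left hn hba
        have h5 : (b - a) * (ε / (b - a)) = ε := by field_simp
        linarith
      have : ε ≤ x - a := min_le_left _ _
      simp only [hudef]
      linarith
    · have h1 : (b - a) / ((n:ℝ) + 3) < ε := by
        have h2 : (b - a) / ((n:ℝ) + 3) ≤ (b - a) / ((n:ℝ) + 1) := by
          apply div_le_div_of_nonneg_left hba.le (by positivity)
          linarith
        have h3 : (b - a) / ((n:ℝ) + 1) = (b - a) * (1 / ((n:ℝ) + 1)) := by ring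
        have h4 : (b - a) * (1 / ((n:ℝ) + 1)) < (b - a) * (ε / (b - a)) :=
          mul_lt_mul_of_pos_left hn hba
        have h5 : (b - a) * (ε / (b - a)) = ε := by field_simp
        linarith
      have : ε ≤ b - x := min_le_right _ _
      simp only [hvdef]
      linarith
  -- a.e. derivative of G on (ta, tb)
  have hGderiv : ∀ᵐ y, y ∈ Ioo ta tb → HasDerivAt G (g y) y := by
    set w : ℕ → ℝ := fun n => tb - (tb - ta) / (n + 3) with hwdef
    have hwfrac : ∀ n : ℕ, 0 < (tb - ta) / ((n:ℝ) + 3) := fun n => div_pos htba (hn3 n)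
    have hwmem : ∀ n : ℕ, w n ∈ Ioo ta tb := by
      intro n
      constructor
      · simp only [hwdef]
        have h1 : (tb - ta) / ((n:ℝ) + 3) < tb - ta := by
          apply div_lt_self htba
          have : (0:ℝ) ≤ (n:ℝ) := Nat.cast_nonneg n
          linarith
        linarith
      · simp only [hwdef]; linarith [hwfrac n]
    have hwcover : ∀ y ∈ Ioo ta tb, ∃ n : ℕ, y < w n := by
      intro y hy
      have hε : 0 < tb - y := by linarith [hy.2]
      obtain ⟨n, hn⟩ := exists_nat_one_div_lt (div_pos hε htba)
      refine ⟨n, ?_⟩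
      have h2 : (tb - ta) / ((n:ℝ) + 3) ≤ (tb - ta) / ((n:ℝ) + 1) := by
        apply div_le_div_of_nonneg_left htba.le (by positivity)
        linarith
      have h3 : (tb - ta) / ((n:ℝ) + 1) = (tb - ta) * (1 / ((n:ℝ) + 1)) := by ring
      have h4 : (tb - ta) * (1 / ((n:ℝ) + 1)) < (tb - ta) * ((tb - y) / (tb - ta)) :=
        mul_lt_mul_of_pos_left hn htba
      have h5 : (tb - ta) * ((tb - y) / (tb - ta)) = tb - y := by field_simp
      simp only [hwdef]
      linarith
    have hpern : ∀ n : ℕ, ∀ᵐ y, y ∈ Ioo ta (w n) → HasDerivAt G (g y) y := by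
      intro n
      set g0 : ℝ → ℝ := (Ioo ta (w n)).indicator g with hg0def
      have hg0int : Integrable g0 :=
        (hgint (w n) (hwmem n)).integrable_indicator measurableSet_Ioo
      filter_upwards [ae_hasDerivAt_primitive g0 hg0int ta] with y hy hmem
      have hval : g0 y = g y := indicator_of_mem hmem g
      rw [← hval]
      apply hy.congr_of_eventuallyEq
      filter_upwards [isOpen_Ioo.mem_nhds hmem] with t ht
      show G t = ∫ s in ta..t, g0 s
      rw [intervalIntegral.integral_of_le ht.1.le, hg0def,
        setIntegral_indicator measurableSet_Ioo]
      have hss : Ioc ta t ∩ Ioo ta (w n) = Ioc ta t :=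
        inter_eq_left.2 fun z hz => ⟨hz.1, lt_of_le_of_lt hz.2 ht.2⟩
      rw [hss, integral_Ioc_eq_integral_Ioo]
    have hall : ∀ᵐ y, ∀ n : ℕ, y ∈ Ioo ta (w n) → HasDerivAt G (g y) y := ae_all_iff.2 hpern
    filter_upwards [hall] with y hy hmem
    obtain ⟨n, hn⟩ := hwcover y hmem
    exact hy n ⟨hmem.1, hn⟩
  -- a.e. derivative of F on (a,b)
  have hFderiv : ∀ᵐ x, x ∈ Ioo a b → HasDerivAt F (f x) x := by
    have hpern : ∀ n : ℕ, ∀ᵐ x, x ∈ Ioo (u n) (v n) → HasDerivAt F (f x) x := by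
      intro n
      set cl : ℝ → ℝ := fun x => min (v n) (max (u n) x) with hcldef
      have hclmem : ∀ x, cl x ∈ Icc (u n) (v n) := by
        intro x
        constructor
        · exact le_min (huv n).le (le_max_left _ _)
        · exact min_le_left _ _
      have hIccsub : Icc (u n) (v n) ⊆ Ioo a b := fun z hz =>
        ⟨(humem n).1.trans_le hz.1, hz.2.trans_lt (hvmem n).2⟩
      have hftmono : Monotone (fun x => f (cl x)) := by
        intro x y hxy
        apply hfmono.mono hIccsub (hclmem x) (hclmem y)
        exact min_le_min le_rfl (max_le_max le_rfl hxy)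
      have hD : volume {x : ℝ | ¬ContinuousAt (fun x => f (cl x)) x} = 0 :=
        Set.Countable.measure_zero hftmono.countable_not_continuousAt _
      filter_upwards [measure_eq_zero_iff_ae_notMem.1 hD] with x hx hmem
      have hfeq : ∀ᶠ t in 𝓝 x, f (cl t) = f t := by
        filter_upwards [isOpen_Ioo.mem_nhds hmem] with t ht
        have : cl t = t := by
          simp only [hcldef]
          rw [max_eq_right ht.1.le, min_eq_right ht.2.le]
        rw [this]
      have hxmem : x ∈ Ioo a b := hIccsub (Ioo_subset_Icc_self hmem)
      have hcf : ContinuousAt f x := by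
        have : ContinuousAt (fun x => f (cl x)) x := not_not.1 hx
        exact this.congr hfeq
      have hII : IntervalIntegrable f volume (u n) x := by
        apply IntegrableOn.intervalIntegrable
        rw [uIcc_of_le hmem.1.le]
        apply (hfint (v n) (hvmem n)).mono_set
        intro z hz
        exact ⟨(humem n).1.trans_le hz.1, hz.2.trans_lt hmem.2⟩
      have hmeasAt : StronglyMeasurableAtFilter f (𝓝 x) :=
        ⟨Ioo a b, isOpen_Ioo.mem_nhds hxmem, hfae.aestronglyMeasurable⟩
      have hder := intervalIntegral.integral_hasDerivAt_right hII hmeasAt hcf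
      apply (hder.const_add (F (u n))).congr_of_eventuallyEq
      filter_upwards [isOpen_Ioo.mem_nhds hmem] with t ht
      show F t = F (u n) + ∫ s in (u n)..t, f s
      have htmem : t ∈ Ioo a b := hIccsub (Ioo_subset_Icc_self ht)
      have hsplit := integral_Ioo_split (f := f) (humem n).1 ht.1.le (hfint t htmem)
      rw [intervalIntegral.integral_of_le ht.1.le, integral_Ioc_eq_integral_Ioo]
      simp only [hFdef]
      linarith [hsplit]
    have hall : ∀ᵐ x, ∀ n : ℕ, x ∈ Ioo (u n) (v n) → HasDerivAt F (f x) x := ae_all_iff.2 hpern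
    filter_upwards [hall] with x hx hmem
    obtain ⟨n, hn⟩ := hcover x hmem
    exact hx n hn
  -- strict monotonicity of G
  have hGmono : StrictMonoOn G (Ioo ta tb) := by
    intro y1 h1 y2 h2 hlt
    have hdiff : G y2 - G y1 = ∫ y in Ioo y1 y2, g y :=
      (integral_Ioo_split h1.1 hlt.le (hgint y2 h2)).symm
    have hgposloc : ∀ᵐ y ∂(volume.restrict (Ioo y1 y2)), 0 < g y :=
      ae_restrict_of_ae_restrict_of_subset (Ioo_subset_Ioo h1.1.le h2.2.le) hgpos
    have hintloc : IntegrableOn g (Ioo y1 y2) :=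
      (hgint y2 h2).mono_set (Ioo_subset_Ioo h1.1.le le_rfl)
    have hpos : 0 < ∫ y in Ioo y1 y2, g y := by
      rw [setIntegral_pos_iff_support_of_nonneg_ae (hgposloc.mono fun y hy => hy.le) hintloc]
      have hnull : volume (Ioo y1 y2 \ Function.support g) = 0 := by
        have h0 : (volume.restrict (Ioo y1 y2)) {y | ¬0 < g y} = 0 := by
          rw [← ae_iff] at *
          exact hgposloc
        rw [Measure.restrict_apply' measurableSet_Ioo] at h0
        apply measure_mono_null _ h0
        intro z hz
        refine ⟨fun hpos => hz.2 ?_, hz.1⟩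
        exact Function.mem_support.2 (ne_of_gt hpos)
      have : volume (Function.support g ∩ Ioo y1 y2) = volume (Ioo y1 y2) := by
        rw [inter_comm]
        exact measure_inter_conull' hnull
      rw [this, Real.volume_Ioo]
      simp [hlt]
    linarith [hdiff, hpos]
  -- image of G is a neighborhood of each of its points
  have hGimg : ∀ y ∈ Ioo ta tb, G '' (Ioo ta tb) ∈ 𝓝 (G y) := by
    intro y hy
    set y1 := (ta + y) / 2 with hy1def
    set y2 := (y + tb) / 2 with hy2def
    have hy1 : y1 ∈ Ioo ta tb := by constructor <;> [simp only [hy1def]; simp only [hy1def]] <;> [linarith [hy.1]; linarith [hy.1, hy.2]]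
    have hy2m : y2 ∈ Ioo ta tb := by
      constructor
      · simp only [hy2def]; linarith [hy.1, hy.2]
      · simp only [hy2def]; linarith [hy.2]
    have hy1y : y1 < y := by simp only [hy1def]; linarith [hy.1]
    have hyy2 : y < y2 := by simp only [hy2def]; linarith [hy.2]
    set y3 := (y2 + tb) / 2 with hy3def
    have hy3 : y3 ∈ Ioo ta tb := by
      constructor
      · simp only [hy3def]; linarith [hy2m.1, hy2m.2]
      · simp only [hy3def]; linarith [hy2m.2]
    have hy23 : y2 < y3 := by simp only [hy3def]; linarith [hy2m.2]
    have hGcont : ContinuousOn G (Icc y1 y2) := by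
      have hint : IntegrableOn g (uIcc y1 y2) := by
        rw [uIcc_of_le (hy1y.trans hyy2).le]
        apply (hgint y3 hy3).mono_set
        intro z hz
        exact ⟨hy1.1.trans_le hz.1, hz.2.trans_lt hy23⟩
      have hcont0 : ContinuousOn (fun t => G y1 + ∫ s in y1..t, g s) (uIcc y1 y2) :=
        continuousOn_const.add (intervalIntegral.continuousOn_primitive_interval hint)
      rw [uIcc_of_le (hy1y.trans hyy2).le] at hcont0
      apply hcont0.congr
      intro t ht
      have htmem : t ∈ Ioo ta tb := ⟨hy1.1.trans_le ht.1, ht.2.trans_lt hy2m.2⟩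
      have hsplit := integral_Ioo_split (f := g) hy1.1 ht.1 (hgint t htmem)
      show G t = G y1 + ∫ s in y1..t, g s
      rw [intervalIntegral.integral_of_le ht.1, integral_Ioc_eq_integral_Ioo]
      simp only [hGdef]
      linarith [hsplit]
    have hsub12 : Icc y1 y2 ⊆ Ioo ta tb := fun z hz =>
      ⟨hy1.1.trans_le hz.1, hz.2.trans_lt hy2m.2⟩
    have hIVT := intermediate_value_Icc (hy1y.trans hyy2).le hGcont
    refine mem_nhds_iff.2 ⟨Ioo (G y1) (G y2), ?_, isOpen_Ioo, ?_⟩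
    · intro z hz
      have : z ∈ Icc (G y1) (G y2) := Ioo_subset_Icc_self hz
      obtain ⟨t, ht, rfl⟩ := hIVT this
      exact mem_image_of_mem G (hsub12 ht)
    · exact ⟨hGmono hy1 hy hy1y, hGmono hy hy2m hyy2⟩
  -- the bad set N and its preimage
  set P : ℝ → Prop := fun y => HasDerivAt G (g y) y ∧ 0 < g y with hPdef
  have hGae : ∀ᵐ y ∂(volume.restrict (Ioo ta tb)), P y := by
    filter_upwards [ae_restrict_of_ae hGderiv, hgpos, ae_restrict_mem measurableSet_Ioo]
      with y h1 h2 h3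
    exact ⟨h1 h3, h2⟩
  set N := toMeasurable volume ({y | ¬ P y} ∩ Ioo ta tb) with hNdef
  have hNnull : volume N = 0 := by
    rw [hNdef, measure_toMeasurable]
    have h0 : (volume.restrict (Ioo ta tb)) {y | ¬ P y} = 0 := by
      rw [← ae_iff] at *
      exact hGae
    rwa [Measure.restrict_apply' measurableSet_Ioo] at h0
  have hNmeas : MeasurableSet N := measurableSet_toMeasurable _ _
  have hNsup : {y | ¬ P y} ∩ Ioo ta tb ⊆ N := subset_toMeasurable _ _
  -- transfer of nullity through η on each Ioo (u n) (v n)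
  have htrans : ∀ n : ℕ, volume (η ⁻¹' N ∩ Ioo (u n) (v n)) = 0 := by
    intro n
    have hmap := aux_map a b ta tb f g η hfpos hgpos hfint hgint hηcont hηmono hηbij heq
      (humem n) (hvmem n) (huv n).le
    have hsubn : Ioo (u n) (v n) ⊆ Ioo a b := fun z hz =>
      ⟨(humem n).1.trans hz.1, hz.2.trans (hvmem n).2⟩
    have hηae : AEMeasurable η
        ((volume.restrict (Ioo (u n) (v n))).withDensity fun x => ENNReal.ofReal (f x)) :=
      ((hηcont.mono hsubn).aemeasurable measurableSet_Ioo).mono_ac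
        (withDensity_absolutelyContinuous _ _)
    have hμ2N : ((volume.restrict (Ioo (η (u n)) (η (v n)))).withDensity
        fun y => ENNReal.ofReal (g y)) N = 0 := by
      rw [withDensity_apply _ hNmeas]
      apply setLIntegral_measure_zero
      rw [Measure.restrict_apply hNmeas]
      exact measure_mono_null inter_subset_left hNnull
    have hμ1pre : ((volume.restrict (Ioo (u n) (v n))).withDensity
        fun x => ENNReal.ofReal (f x)) (η ⁻¹' N) = 0 := by
      rw [← Measure.map_apply_of_aemeasurable hηae hNmeas, hmap]
      exact hμ2N
    have hfaen : AEMeasurable (fun x => ENNReal.ofReal (f x))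
        (volume.restrict (Ioo (u n) (v n))) :=
      ((hfae.mono_measure (Measure.restrict_mono hsubn le_rfl)).ennreal_ofReal)
    have h0 := (withDensity_apply_eq_zero' hfaen).1 hμ1pre
    rw [Measure.restrict_apply' measurableSet_Ioo] at h0
    apply measure_mono_null _ h0
    intro z hz
    refine ⟨⟨?_, hz.1⟩, hz.2⟩
    have : 0 < f z := hfpos z (hsubn hz.2)
    simp only [ne_eq, ENNReal.ofReal_eq_zero, not_le, mem_setOf_eq]
    exact this
  have htransfer : volume (η ⁻¹' N ∩ Ioo a b) = 0 := by
    refine measure_mono_null ?_ (measure_iUnion_null htrans)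
    intro z hz
    obtain ⟨n, hn⟩ := hcover z hz.2
    exact mem_iUnion.2 ⟨n, hz.1, hn⟩
  -- the combined a.e. statement on (a,b)
  have hae2 : ∀ᵐ x ∂(volume.restrict (Ioo a b)),
      HasDerivAt η (f x / g (η x)) x ∧ 0 < g (η x) := by
    have hnN : ∀ᵐ x ∂(volume.restrict (Ioo a b)), x ∉ η ⁻¹' N := by
      apply measure_eq_zero_iff_ae_notMem.1
      rw [Measure.restrict_apply' measurableSet_Ioo]
      exact htransfer
    filter_upwards [ae_restrict_mem measurableSet_Ioo, ae_restrict_of_ae hFderiv, hnN]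
      with x hmem hF hxN
    have hηx : η x ∈ Ioo ta tb := hηbij.mapsTo hmem
    have hP : P (η x) := by
      by_contra hnot
      exact hxN (hNsup ⟨hnot, hηx⟩)
    obtain ⟨hGd, hgx⟩ := hP
    have hm0 : g (η x) ≠ 0 := ne_of_gt hgx
    have hFx : F x = G (η x) := heq x hmem
    have hφd : HasDerivAt (Function.invFunOn G (Ioo ta tb)) (g (η x))⁻¹ (F x) := by
      rw [hFx]
      exact aux_inv_hasDerivAt hGmono hηx (hGimg (η x) hηx) hGd hm0
    have hFd : HasDerivAt F (f x) x := hF hmem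
    have hcomp : HasDerivAt (Function.invFunOn G (Ioo ta tb) ∘ F) ((g (η x))⁻¹ * f x) x :=
      HasDerivAt.comp x hφd hFd
    have heqn : η =ᶠ[𝓝 x] (Function.invFunOn G (Ioo ta tb) ∘ F) := by
      filter_upwards [isOpen_Ioo.mem_nhds hmem] with t ht
      show η t = Function.invFunOn G (Ioo ta tb) (F t)
      rw [show F t = G (η t) from heq t ht]
      exact (hGmono.injOn.leftInvOn_invFunOn (hηbij.mapsTo ht)).symm
    constructor
    · have := hcomp.congr_of_eventuallyEq heqn
      rwa [show (g (η x))⁻¹ * f x = f x / g (η x) by rw [div_eq_inv_mul]] at this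
    · exact hgx
  refine ⟨fun x => f x / g (η x), ?_, ?_⟩
  · -- the fundamental theorem of calculus part
    have main1 : ∀ α β : ℝ, α ∈ Ioo a b → β ∈ Ioo a b → α ≤ β →
        η β - η α = ∫ t in Ioo α β, f t / g (η t) := by
      intro α β hα hβ hαβ
      have hsub : Ioo α β ⊆ Ioo a b := Ioo_subset_Ioo hα.1.le hβ.2.le
      have hηα : η α ∈ Ioo ta tb := hηbij.mapsTo hα
      have hηβ : η β ∈ Ioo ta tb := hηbij.mapsTo hβ
      have hηle : η α ≤ η β := by
        rcases eq_or_lt_of_le hαβ with rfl | h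
        · exact le_rfl
        · exact (hηmono hα hβ h).le
      have hmap := aux_map a b ta tb f g η hfpos hgpos hfint hgint hηcont hηmono hηbij heq
        hα hβ hαβ
      have hηaem : AEMeasurable η
          ((volume.restrict (Ioo α β)).withDensity fun x => ENNReal.ofReal (f x)) :=
        ((hηcont.mono hsub).aemeasurable measurableSet_Ioo).mono_ac
          (withDensity_absolutelyContinuous _ _)
      have hgpos2 : ∀ᵐ y ∂(volume.restrict (Ioo (η α) (η β))), 0 < g y :=
        ae_restrict_of_ae_restrict_of_subset (Ioo_subset_Ioo hηα.1.le hηβ.2.le) hgpos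
      have hφmeas : Measurable (fun y => ENNReal.ofReal ((g y)⁻¹)) :=
        (hgmeas.inv).ennreal_ofReal
      -- compute the lintegral over μ2
      have hA : ∫⁻ y, ENNReal.ofReal ((g y)⁻¹)
          ∂((volume.restrict (Ioo (η α) (η β))).withDensity fun y => ENNReal.ofReal (g y)) =
          ENNReal.ofReal (η β - η α) := by
        rw [lintegral_withDensity_eq_lintegral_mul _ hgmeas.ennreal_ofReal hφmeas]
        have : ∫⁻ y in Ioo (η α) (η β),
            (fun y => ENNReal.ofReal (g y) * ENNReal.ofReal ((g y)⁻¹)) y =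
            ∫⁻ _ in Ioo (η α) (η β), 1 := by
          apply lintegral_congr_ae
          filter_upwards [hgpos2] with y hy
          rw [← ENNReal.ofReal_mul hy.le, mul_inv_cancel₀ (ne_of_gt hy), ENNReal.ofReal_one]
        rw [show (fun y => ENNReal.ofReal (g y)) * (fun y => ENNReal.ofReal ((g y)⁻¹)) =
          fun y => ENNReal.ofReal (g y) * ENNReal.ofReal ((g y)⁻¹) from rfl, this,
          setLIntegral_one, Real.volume_Ioo]
      -- compute via the pushforward
      have hfaeαβ : AEMeasurable f (volume.restrict (Ioo α β)) :=
        hfae.mono_measure (Measure.restrict_mono hsub le_rfl)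
      have hηaeαβ : AEMeasurable η (volume.restrict (Ioo α β)) :=
        (hηcont.mono hsub).aemeasurable measurableSet_Ioo
      have hB : ∫⁻ y, ENNReal.ofReal ((g y)⁻¹)
          ∂((volume.restrict (Ioo (η α) (η β))).withDensity fun y => ENNReal.ofReal (g y)) =
          ∫⁻ x in Ioo α β, ENNReal.ofReal (f x / g (η x)) := by
        have hcompae : AEMeasurable (fun x => ENNReal.ofReal ((g (η x))⁻¹))
            (volume.restrict (Ioo α β)) := hφmeas.comp_aemeasurable hηaeαβ
        rw [← hmap, lintegral_map' hφmeas.aemeasurable hηaem,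
          lintegral_withDensity_eq_lintegral_mul₀ hfaeαβ.ennreal_ofReal hcompae]
        apply lintegral_congr_ae
        have hfnn : ∀ᵐ x ∂(volume.restrict (Ioo α β)), 0 ≤ f x :=
          (ae_restrict_iff' measurableSet_Ioo).2
            (Eventually.of_forall fun x hx => (hfpos x (hsub hx)).le)
        filter_upwards [hfnn] with x hx
        show ENNReal.ofReal (f x) * ENNReal.ofReal ((g (η x))⁻¹) = _
        rw [← ENNReal.ofReal_mul hx, div_eq_mul_inv]
      have hkey : ∫⁻ x in Ioo α β, ENNReal.ofReal (f x / g (η x)) =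
          ENNReal.ofReal (η β - η α) := by rw [← hB, hA]
      -- nonnegativity a.e.
      have hgηpos : ∀ᵐ x ∂(volume.restrict (Ioo α β)), 0 < g (η x) := by
        have := ae_restrict_of_ae_restrict_of_subset hsub hae2
        filter_upwards [this] with x hx
        exact hx.2
      have hnn : ∀ᵐ x ∂(volume.restrict (Ioo α β)), 0 ≤ f x / g (η x) := by
        have hfnn : ∀ᵐ x ∂(volume.restrict (Ioo α β)), 0 ≤ f x :=
          (ae_restrict_iff' measurableSet_Ioo).2
            (Eventually.of_forall fun x hx => (hfpos x (hsub hx)).le)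
        filter_upwards [hfnn, hgηpos] with x h1 h2
        exact div_nonneg h1 h2.le
      have hη'ae : AEMeasurable (fun x => f x / g (η x)) (volume.restrict (Ioo α β)) :=
        hfaeαβ.div (hgmeas.comp_aemeasurable hηaeαβ)
      rw [integral_eq_lintegral_of_nonneg_ae hnn hη'ae.aestronglyMeasurable]
      rw [hkey, ENNReal.toReal_ofReal (by linarith [hηle])]
    intro α hα β hβ
    rcases le_total α β with h | h
    · rw [intervalIntegral.integral_of_le h, integral_Ioc_eq_integral_Ioo]
      exact main1 α β hα hβ h
    · rw [intervalIntegral.integral_symm, intervalIntegral.integral_of_le h,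
        integral_Ioc_eq_integral_Ioo]
      have := main1 β α hβ hα h
      linarith [this]
  · filter_upwards [hae2] with x hx
    refine ⟨hx.1, ?_⟩
    rw [div_mul_cancel₀ (f x) (ne_of_gt hx.2)]
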